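/- Let t ≥ 1 and let R be a d×t random matrix whose entries are i.i.d., each equal to +1/√t or −1/√t with probability 1/2. Then for any real matrix C ∈ ℝ^{n×d}, Var(‖CR‖_F²) ≤ (2/t)·‖C‖_F⁴. -/

import Mathlib

open MeasureTheory
open scoped Matrix

/-- Frobenius norm of a real matrix. -/
noncomputable def frobNorm {m n : ℕ} (M : Matrix (Fin m) (Fin n) ℝ) : ℝ :=
  Real.sqrt (∑ i, ∑ j, (M i j) ^ 2)

/-- Spectral (operator) norm of a real matrix, viewed as a linear map between
Euclidean spaces. -/
noncomputable def specNorm {m n : ℕ} (M : Matrix (Fin m) (Fin n) ℝ) : ℝ :=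
  ‖LinearMap.toContinuousLinearMap (Matrix.toEuclideanLin M)‖

/-- `P` is the Moore–Penrose pseudoinverse of `M` (the four Penrose conditions;
such a `P` is unique). -/
def IsMoorePenrose {m n : ℕ} (M : Matrix (Fin m) (Fin n) ℝ)
    (P : Matrix (Fin n) (Fin m) ℝ) : Prop :=
  M * P * M = M ∧ P * M * P = P ∧ (M * P)ᵀ = M * P ∧ (P * M)ᵀ = P * M

/-- `X` is an `n × k` cluster indicator matrix: each row `i` has a single nonzero
entry, in column `f i`, equal to `1/√(z_{f i})` where `z_j` is the number of rows
assigned to column `j`. -/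
def IsIndicator {n k : ℕ} (X : Matrix (Fin n) (Fin k) ℝ) : Prop :=
  ∃ f : Fin n → Fin k, ∀ i j, X i j =
    if f i = j then 1 / Real.sqrt ((Finset.univ.filter fun i' => f i' = j).card) else 0

/-- The singular values of a `k × t` real matrix `M` (in some order): the square
roots of the eigenvalues of `M * Mᵀ`. -/
noncomputable def singVals {k t : ℕ} (M : Matrix (Fin k) (Fin t) ℝ) (i : Fin k) : ℝ :=
  Real.sqrt ((Matrix.isHermitian_mul_conjTranspose_self M).eigenvalues i)

/-- The `d × t` random sign matrix with entries `±1/√t`, as a function of the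
sample point `ω` (a `d × t` array of fair coins). -/
noncomputable def signMatrix (d t : ℕ) (ω : Fin d → Fin t → Bool) :
    Matrix (Fin d) (Fin t) ℝ :=
  Matrix.of fun i j => (if ω i j then (1 : ℝ) else -1) / Real.sqrt t

/-- The law of a `d × t` matrix of i.i.d. fair signs: the uniform probability
measure on all `d × t` sign patterns. -/
noncomputable def signMeasure (d t : ℕ) : Measure (Fin d → Fin t → Bool) :=
  (PMF.uniformOfFintype (Fin d → Fin t → Bool)).toMeasure

noncomputable def bsgn (b : Bool) : ℝ := if b then 1 else -1

lemma sum_fn_bool {ι : Type*} [Fintype ι] [DecidableEq ι] (f : ι → Bool → ℝ) :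
    ∑ ω : ι → Bool, ∏ i, f i (ω i) = ∏ i, (f i true + f i false) := by
  have h := Finset.prod_univ_sum (fun _ : ι => (Finset.univ : Finset Bool)) f
  rw [Fintype.piFinset_univ] at h
  rw [← h]
  exact Finset.prod_congr rfl fun i _ => by simp [Fintype.sum_bool]

lemma sum_prod_bsgn {ι : Type*} [Fintype ι] [DecidableEq ι] (c : ι → ℕ) :
    ∑ ω : ι → Bool, ∏ i, (bsgn (ω i)) ^ (c i)
      = if ∀ i, Even (c i) then ((Fintype.card (ι → Bool) : ℝ)) else 0 := by
  rw [sum_fn_bool (fun i b => bsgn b ^ c i)]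
  by_cases h : ∀ i, Even (c i)
  · rw [if_pos h]
    have h2 : ∀ i : ι, bsgn true ^ c i + bsgn false ^ c i = 2 := by
      intro i; simp [bsgn, (h i).neg_one_pow]; norm_num
    rw [Finset.prod_congr rfl fun i _ => h2 i, Finset.prod_const]
    simp [Fintype.card_fun]
  · rw [if_neg h]
    push_neg at h
    obtain ⟨i, hi⟩ := h
    refine Finset.prod_eq_zero (Finset.mem_univ i) ?_
    rw [Nat.not_even_iff_odd] at hi
    simp [bsgn, hi.neg_one_pow]

lemma parity2 {ι : Type*} [DecidableEq ι] (p q : ι) :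
    (∀ i : ι, Even ((if i = p then 1 else 0) + (if i = q then 1 else 0))) ↔ p = q := by
  constructor
  · intro h
    have hp := h p
    by_cases hpq : p = q
    · exact hpq
    · simp [hpq] at hp
  · rintro rfl i
    by_cases hip : i = p <;> simp [hip]

lemma parity4 {ι : Type*} [DecidableEq ι] (p q r s : ι) :
    (∀ i : ι, Even ((if i = p then 1 else 0) + (if i = q then 1 else 0)
        + ((if i = r then 1 else 0) + (if i = s then 1 else 0))))
      ↔ (p = q ∧ r = s) ∨ (p = r ∧ q = s) ∨ (p = s ∧ q = r) := by
  constructor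
  · intro h
    have hp := h p; have hq := h q; have hr := h r; have hs := h s
    clear h
    by_cases h1 : p = q <;> by_cases h2 : r = s <;> by_cases h3 : p = r <;>
      by_cases h4 : q = s <;> by_cases h5 : p = s <;> by_cases h6 : q = r <;>
      simp_all [Nat.even_iff] <;>
      first
        | tauto
        | (split_ifs at * <;> omega)
        | omega
  · rintro (⟨rfl, rfl⟩ | ⟨rfl, rfl⟩ | ⟨rfl, rfl⟩) i
    · by_cases h1 : i = p <;> by_cases h2 : i = r <;> simp [h1, h2, Nat.even_iff] <;> first | (split_ifs <;> omega) | omega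
    · by_cases h1 : i = p <;> by_cases h2 : i = q <;> simp [h1, h2, Nat.even_iff] <;> first | (split_ifs <;> omega) | omega
    · by_cases h1 : i = p <;> by_cases h2 : i = q <;> simp [h1, h2, Nat.even_iff] <;> first | (split_ifs <;> omega) | omega

lemma prod_bsgn_single {ι : Type*} [Fintype ι] [DecidableEq ι] (ω : ι → Bool) (p : ι) :
    ∏ i, bsgn (ω i) ^ (if i = p then 1 else 0) = bsgn (ω p) := by
  simp [pow_ite, Finset.prod_ite_eq']

lemma mom2 {ι : Type*} [Fintype ι] [DecidableEq ι] (p q : ι) :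
    ∑ ω : ι → Bool, bsgn (ω p) * bsgn (ω q)
      = if p = q then ((Fintype.card (ι → Bool) : ℝ)) else 0 := by
  have h : ∀ ω : ι → Bool, bsgn (ω p) * bsgn (ω q)
      = ∏ i, bsgn (ω i) ^ ((if i = p then 1 else 0) + (if i = q then 1 else 0)) := by
    intro ω; simp only [pow_add, Finset.prod_mul_distrib, prod_bsgn_single]
  rw [Finset.sum_congr rfl fun ω _ => h ω, sum_prod_bsgn]
  rw [if_congr (parity2 p q) rfl rfl]

lemma mom4 {ι : Type*} [Fintype ι] [DecidableEq ι] (p q r s : ι) :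
    ∑ ω : ι → Bool, bsgn (ω p) * bsgn (ω q) * (bsgn (ω r) * bsgn (ω s))
      = if (p = q ∧ r = s) ∨ (p = r ∧ q = s) ∨ (p = s ∧ q = r)
          then ((Fintype.card (ι → Bool) : ℝ)) else 0 := by
  have h : ∀ ω : ι → Bool, bsgn (ω p) * bsgn (ω q) * (bsgn (ω r) * bsgn (ω s))
      = ∏ i, bsgn (ω i) ^ ((if i = p then 1 else 0) + (if i = q then 1 else 0)
          + ((if i = r then 1 else 0) + (if i = s then 1 else 0))) := by
    intro ω; simp only [pow_add, Finset.prod_mul_distrib, prod_bsgn_single]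
  rw [Finset.sum_congr rfl fun ω _ => h ω, sum_prod_bsgn]
  rw [if_congr (parity4 p q r s) rfl rfl]

lemma mom2C {d t : ℕ} (p q : Fin d × Fin t) :
    ∑ ω : Fin d → Fin t → Bool, bsgn (ω p.1 p.2) * bsgn (ω q.1 q.2)
      = if p = q then ((Fintype.card (Fin d → Fin t → Bool) : ℝ)) else 0 := by
  rw [← Equiv.sum_comp (Equiv.curry (Fin d) (Fin t) Bool)
    (fun ω => bsgn (ω p.1 p.2) * bsgn (ω q.1 q.2))]
  have h := mom2 p q
  rw [show (Fintype.card (Fin d × Fin t → Bool))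
      = Fintype.card (Fin d → Fin t → Bool) from
    Fintype.card_congr (Equiv.curry _ _ _)] at h
  exact h

lemma mom4C {d t : ℕ} (p q r s : Fin d × Fin t) :
    ∑ ω : Fin d → Fin t → Bool,
      bsgn (ω p.1 p.2) * bsgn (ω q.1 q.2) * (bsgn (ω r.1 r.2) * bsgn (ω s.1 s.2))
      = if (p = q ∧ r = s) ∨ (p = r ∧ q = s) ∨ (p = s ∧ q = r)
          then ((Fintype.card (Fin d → Fin t → Bool) : ℝ)) else 0 := by
  rw [← Equiv.sum_comp (Equiv.curry (Fin d) (Fin t) Bool)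
    (fun ω => bsgn (ω p.1 p.2) * bsgn (ω q.1 q.2) * (bsgn (ω r.1 r.2) * bsgn (ω s.1 s.2)))]
  have h := mom4 p q r s
  rw [show (Fintype.card (Fin d × Fin t → Bool))
      = Fintype.card (Fin d → Fin t → Bool) from
    Fintype.card_congr (Equiv.curry _ _ _)] at h
  exact h

lemma sum_swap3 {α β γ : Type*} [Fintype α] [Fintype β] [Fintype γ] (f : α → β → γ → ℝ) :
    ∑ a, ∑ b, ∑ c, f a b c = ∑ b, ∑ c, ∑ a, f a b c := by
  rw [Finset.sum_comm]
  exact Finset.sum_congr rfl fun b _ => Finset.sum_comm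

lemma integral_signMeasure {d t : ℕ} (f : (Fin d → Fin t → Bool) → ℝ) :
    ∫ ω, f ω ∂ signMeasure d t
      = (Fintype.card (Fin d → Fin t → Bool) : ℝ)⁻¹ * ∑ ω, f ω := by
  haveI : IsProbabilityMeasure (signMeasure d t) := by
    unfold signMeasure; infer_instance
  rw [integral_fintype (Integrable.of_finite)]
  rw [Finset.mul_sum]
  refine Finset.sum_congr rfl fun ω _ => ?_
  rw [smul_eq_mul]
  congr 1
  rw [measureReal_def]
  rw [show signMeasure d t {ω} = (PMF.uniformOfFintype (Fin d → Fin t → Bool)) ω from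
    PMF.toMeasure_apply_singleton _ _ (measurableSet_singleton _)]
  rw [PMF.uniformOfFintype_apply]
  simp


lemma chi_ident {α β : Type*} [DecidableEq α] [DecidableEq β] (X : ℝ) (j j' : β) (k l k' l' : α) :
    (if (((k,j) = (l,j) ∧ (k',j') = (l',j')) ∨ ((k,j) = (k',j') ∧ (l,j) = (l',j'))
        ∨ ((k,j) = (l',j') ∧ (l,j) = (k',j'))) then X else 0)
      = X * ((if k = l then (1:ℝ) else 0) * (if k' = l' then (1:ℝ) else 0))
        + X * ((if j = j' then (1:ℝ) else 0) * ((if k = k' then (1:ℝ) else 0) * (if l = l' then (1:ℝ) else 0)))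
        + X * ((if j = j' then (1:ℝ) else 0) * ((if k = l' then (1:ℝ) else 0) * (if l = k' then (1:ℝ) else 0)))
        - 2 * (X * ((if j = j' then (1:ℝ) else 0) * ((if k = l then (1:ℝ) else 0) *
            ((if k' = l' then (1:ℝ) else 0) * ((if k = k' then (1:ℝ) else 0) * (if l = l' then (1:ℝ) else 0)))))) := by
  simp only [Prod.mk.injEq]
  by_cases h1 : k = l <;> by_cases h2 : k' = l' <;> by_cases h3 : j = j' <;>
    by_cases h4 : k = k' <;> by_cases h5 : l = l' <;> by_cases h6 : k = l' <;>
    by_cases h7 : l = k' <;> simp_all <;> ring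

lemma single_diag {d t : ℕ} (A : Fin d → Fin d → ℝ) :
    ∑ x : Fin t × Fin d × Fin d, A x.2.1 x.2.2 * (if x.2.1 = x.2.2 then (1:ℝ) else 0)
      = (t:ℝ) * ∑ kk, A kk kk := by
  simp only [Fintype.sum_prod_type, mul_ite, mul_one, mul_zero, Finset.sum_ite_eq,
    Finset.mem_univ, if_true, Finset.sum_const, Finset.card_univ, Fintype.card_fin,
    nsmul_eq_mul]

lemma V1eval {d t : ℕ} (A : Fin d → Fin d → ℝ) :
    ∑ x : Fin t × Fin d × Fin d, ∑ y : Fin t × Fin d × Fin d,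
      (A x.2.1 x.2.2 * A y.2.1 y.2.2) *
        ((if x.2.1 = x.2.2 then (1:ℝ) else 0) * (if y.2.1 = y.2.2 then (1:ℝ) else 0))
      = ((t:ℝ) * ∑ kk, A kk kk) * ((t:ℝ) * ∑ kk, A kk kk) := by
  rw [← single_diag (t := t) A, Finset.sum_mul_sum]
  exact Finset.sum_congr rfl fun x _ => Finset.sum_congr rfl fun y _ => by ring

lemma V2eval {d t : ℕ} (A : Fin d → Fin d → ℝ) :
    ∑ x : Fin t × Fin d × Fin d, ∑ y : Fin t × Fin d × Fin d,
      (A x.2.1 x.2.2 * A y.2.1 y.2.2) *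
        ((if x.1 = y.1 then (1:ℝ) else 0) *
          ((if x.2.1 = y.2.1 then (1:ℝ) else 0) * (if x.2.2 = y.2.2 then (1:ℝ) else 0)))
      = (t:ℝ) * ∑ k, ∑ l, A k l * A k l := by
  simp only [Fintype.sum_prod_type, mul_ite, ite_mul, mul_one, one_mul, mul_zero, zero_mul,
    Finset.sum_ite_eq, Finset.mem_univ, if_true, Finset.sum_const, Finset.card_univ,
    Fintype.card_fin, nsmul_eq_mul, Finset.mul_sum]

lemma V3eval {d t : ℕ} (A : Fin d → Fin d → ℝ) :
    ∑ x : Fin t × Fin d × Fin d, ∑ y : Fin t × Fin d × Fin d,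
      (A x.2.1 x.2.2 * A y.2.1 y.2.2) *
        ((if x.1 = y.1 then (1:ℝ) else 0) *
          ((if x.2.1 = y.2.2 then (1:ℝ) else 0) * (if x.2.2 = y.2.1 then (1:ℝ) else 0)))
      = (t:ℝ) * ∑ k, ∑ l, A k l * A l k := by
  simp only [Fintype.sum_prod_type, mul_ite, ite_mul, mul_one, one_mul, mul_zero, zero_mul,
    Finset.sum_ite_eq, Finset.sum_ite_eq', Finset.sum_ite_irrel, Finset.sum_const_zero,
    Finset.mem_univ, if_true, Finset.sum_const,
    Finset.card_univ, Fintype.card_fin, nsmul_eq_mul, Finset.mul_sum]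

lemma V4eval {d t : ℕ} (A : Fin d → Fin d → ℝ) :
    ∑ x : Fin t × Fin d × Fin d, ∑ y : Fin t × Fin d × Fin d,
      (A x.2.1 x.2.2 * A y.2.1 y.2.2) *
        ((if x.1 = y.1 then (1:ℝ) else 0) * ((if x.2.1 = x.2.2 then (1:ℝ) else 0) *
          ((if y.2.1 = y.2.2 then (1:ℝ) else 0) *
            ((if x.2.1 = y.2.1 then (1:ℝ) else 0) * (if x.2.2 = y.2.2 then (1:ℝ) else 0)))))
      = (t:ℝ) * ∑ k, A k k * A k k := by
  simp only [Fintype.sum_prod_type, mul_ite, ite_mul, mul_one, one_mul, mul_zero, zero_mul,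
    Finset.sum_ite_eq, Finset.sum_ite_eq', Finset.sum_ite_irrel, Finset.sum_const_zero,
    Finset.mem_univ, if_true, Finset.sum_const,
    Finset.card_univ, Fintype.card_fin, nsmul_eq_mul, Finset.mul_sum]

theorem statement9 (d t n : ℕ) (ht : 1 ≤ t) (C : Matrix (Fin n) (Fin d) ℝ) :
    ProbabilityTheory.variance (fun ω => frobNorm (C * signMatrix d t ω) ^ 2)
        (signMeasure d t) ≤
      2 / (t : ℝ) * frobNorm C ^ 4 := by
  haveI : IsProbabilityMeasure (signMeasure d t) := by
    unfold signMeasure; infer_instance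
  have ht0 : (0:ℝ) < t := by exact_mod_cast ht
  -- notation
  set G : Fin d → Fin d → ℝ := fun k l => ∑ i, C i k * C i l with hG
  set N : ℝ := (Fintype.card (Fin d → Fin t → Bool) : ℝ) with hN
  have hN0 : 0 < N := by
    rw [hN]; exact_mod_cast Fintype.card_pos
  set S : (Fin d → Fin t → Bool) → ℝ := fun ω => frobNorm (C * signMatrix d t ω) ^ 2 with hSdef
  -- pointwise expansion
  have hS : ∀ ω, S ω = (t:ℝ)⁻¹ *
      ∑ x : Fin t × Fin d × Fin d, G x.2.1 x.2.2 * (bsgn (ω x.2.1 x.1) * bsgn (ω x.2.2 x.1)) := by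
    intro ω
    have hsq : (Real.sqrt t)⁻¹ * (Real.sqrt t)⁻¹ = (t:ℝ)⁻¹ := by
      rw [← mul_inv, Real.mul_self_sqrt (by positivity)]
    have hentry : ∀ (i : Fin n) (j : Fin t), (C * signMatrix d t ω) i j
        = ∑ k, C i k * bsgn (ω k j) * (Real.sqrt t)⁻¹ := by
      intro i j
      rw [Matrix.mul_apply]
      refine Finset.sum_congr rfl fun k _ => ?_
      simp [signMatrix, bsgn, div_eq_mul_inv, mul_assoc]
    have hrow : ∀ (i : Fin n) (j : Fin t), ((C * signMatrix d t ω) i j)^2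
        = ∑ y : Fin d × Fin d, C i y.1 * C i y.2 * (bsgn (ω y.1 j) * bsgn (ω y.2 j)) * (t:ℝ)⁻¹ := by
      intro i j
      rw [hentry, sq, Finset.sum_mul_sum, Fintype.sum_prod_type]
      refine Finset.sum_congr rfl fun k _ => Finset.sum_congr rfl fun l _ => ?_
      calc (C i k * bsgn (ω k j) * (Real.sqrt t)⁻¹) * (C i l * bsgn (ω l j) * (Real.sqrt t)⁻¹)
          = C i k * C i l * (bsgn (ω k j) * bsgn (ω l j)) * ((Real.sqrt t)⁻¹ * (Real.sqrt t)⁻¹) := by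
            ring
        _ = C i k * C i l * (bsgn (ω k j) * bsgn (ω l j)) * (t:ℝ)⁻¹ := by rw [hsq]
    show frobNorm (C * signMatrix d t ω) ^ 2 = _
    unfold frobNorm
    rw [Real.sq_sqrt (by positivity)]
    calc ∑ i, ∑ j, ((C * signMatrix d t ω) i j)^2
        = ∑ i, ∑ j, ∑ y : Fin d × Fin d,
            C i y.1 * C i y.2 * (bsgn (ω y.1 j) * bsgn (ω y.2 j)) * (t:ℝ)⁻¹ :=
          Finset.sum_congr rfl fun i _ => Finset.sum_congr rfl fun j _ => hrow i j
      _ = ∑ j, ∑ y : Fin d × Fin d, ∑ i,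
            C i y.1 * C i y.2 * (bsgn (ω y.1 j) * bsgn (ω y.2 j)) * (t:ℝ)⁻¹ := sum_swap3 _
      _ = (t:ℝ)⁻¹ * ∑ x : Fin t × Fin d × Fin d,
            G x.2.1 x.2.2 * (bsgn (ω x.2.1 x.1) * bsgn (ω x.2.2 x.1)) := by
          rw [Fintype.sum_prod_type, Finset.mul_sum]
          refine Finset.sum_congr rfl fun j _ => ?_
          rw [Finset.mul_sum]
          refine Finset.sum_congr rfl fun y _ => ?_
          rw [← Finset.sum_mul, ← Finset.sum_mul, hG]
          ring
  -- first moment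
  have hA : ∑ ω, S ω = N * (∑ k, G k k) := by
    rw [Finset.sum_congr rfl fun ω _ => hS ω, ← Finset.mul_sum, Finset.sum_comm]
    have h1 : ∀ x : Fin t × Fin d × Fin d,
        ∑ ω : Fin d → Fin t → Bool, G x.2.1 x.2.2 * (bsgn (ω x.2.1 x.1) * bsgn (ω x.2.2 x.1))
          = G x.2.1 x.2.2 * (if x.2.1 = x.2.2 then N else 0) := by
      intro x
      rw [← Finset.mul_sum, mom2C (⟨x.2.1, x.1⟩ : Fin d × Fin t) ⟨x.2.2, x.1⟩]
      congr 1
      by_cases hx : x.2.1 = x.2.2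
      · have hx2 : (⟨x.2.1, x.1⟩ : Fin d × Fin t) = ⟨x.2.2, x.1⟩ := by rw [hx]
        rw [if_pos hx2, if_pos hx, hN]
      · have hx2 : (⟨x.2.1, x.1⟩ : Fin d × Fin t) ≠ ⟨x.2.2, x.1⟩ := by
          simp [Prod.ext_iff, hx]
        rw [if_neg hx2, if_neg hx]
    rw [Finset.sum_congr rfl fun x _ => h1 x]
    rw [Fintype.sum_prod_type]
    simp only [Fintype.sum_prod_type, mul_ite, mul_zero, Finset.sum_ite_eq,
      Finset.mem_univ, if_true]
    rw [Finset.sum_const, Finset.card_univ, Fintype.card_fin, nsmul_eq_mul,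
      ← mul_assoc, inv_mul_cancel₀ (ne_of_gt ht0), one_mul, ← Finset.sum_mul]
    ring
  -- second moment
  have hB : ∑ ω, (S ω)^2 = N * ((∑ k, G k k)^2
      + 2 * (t:ℝ)⁻¹ * ((∑ k, ∑ l, G k l * G k l) - ∑ k, (G k k)^2)) := by
    have hS2 : ∀ ω, (S ω)^2 = (t:ℝ)⁻¹ * ((t:ℝ)⁻¹ *
        ∑ x : Fin t × Fin d × Fin d, ∑ y : Fin t × Fin d × Fin d,
          (G x.2.1 x.2.2 * G y.2.1 y.2.2) *
            ((bsgn (ω x.2.1 x.1) * bsgn (ω x.2.2 x.1)) *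
              (bsgn (ω y.2.1 y.1) * bsgn (ω y.2.2 y.1)))) := by
      intro ω
      have hsq : ∀ A : ℝ, ((t:ℝ)⁻¹ * A)^2 = (t:ℝ)⁻¹ * ((t:ℝ)⁻¹ * (A * A)) := fun A => by ring
      rw [hS ω, hsq, Finset.sum_mul_sum]
      congr 2
      exact Finset.sum_congr rfl fun x _ => Finset.sum_congr rfl fun y _ => by ring
    rw [Finset.sum_congr rfl fun ω _ => hS2 ω, ← Finset.mul_sum, ← Finset.mul_sum, sum_swap3]
    have h2 : ∀ (x y : Fin t × Fin d × Fin d),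
        ∑ ω : Fin d → Fin t → Bool,
          (G x.2.1 x.2.2 * G y.2.1 y.2.2) *
            ((bsgn (ω x.2.1 x.1) * bsgn (ω x.2.2 x.1)) *
              (bsgn (ω y.2.1 y.1) * bsgn (ω y.2.2 y.1)))
        = (G x.2.1 x.2.2 * G y.2.1 y.2.2) *
            (if (((x.2.1, x.1) = (x.2.2, x.1) ∧ (y.2.1, y.1) = (y.2.2, y.1))
              ∨ ((x.2.1, x.1) = (y.2.1, y.1) ∧ (x.2.2, x.1) = (y.2.2, y.1))
              ∨ ((x.2.1, x.1) = (y.2.2, y.1) ∧ (x.2.2, x.1) = (y.2.1, y.1))) then N else 0) := by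
      intro x y
      rw [← Finset.mul_sum]
      congr 1
      have h := mom4C (⟨x.2.1, x.1⟩ : Fin d × Fin t) ⟨x.2.2, x.1⟩ ⟨y.2.1, y.1⟩ ⟨y.2.2, y.1⟩
      rw [← hN] at h
      simpa using h
    rw [Finset.sum_congr rfl fun x _ => Finset.sum_congr rfl fun y _ => h2 x y]
    rw [Finset.sum_congr rfl fun x _ => Finset.sum_congr rfl fun y _ => by
      rw [chi_ident N x.1 y.1 x.2.1 x.2.2 y.2.1 y.2.2]]
    have h3 : ∀ (x y : Fin t × Fin d × Fin d),
        (G x.2.1 x.2.2 * G y.2.1 y.2.2) *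
          (N * ((if x.2.1 = x.2.2 then (1:ℝ) else 0) * (if y.2.1 = y.2.2 then (1:ℝ) else 0))
          + N * ((if x.1 = y.1 then (1:ℝ) else 0) *
              ((if x.2.1 = y.2.1 then (1:ℝ) else 0) * (if x.2.2 = y.2.2 then (1:ℝ) else 0)))
          + N * ((if x.1 = y.1 then (1:ℝ) else 0) *
              ((if x.2.1 = y.2.2 then (1:ℝ) else 0) * (if x.2.2 = y.2.1 then (1:ℝ) else 0)))
          - 2 * (N * ((if x.1 = y.1 then (1:ℝ) else 0) * ((if x.2.1 = x.2.2 then (1:ℝ) else 0) *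
              ((if y.2.1 = y.2.2 then (1:ℝ) else 0) *
                ((if x.2.1 = y.2.1 then (1:ℝ) else 0) * (if x.2.2 = y.2.2 then (1:ℝ) else 0)))))))
        = N * ((G x.2.1 x.2.2 * G y.2.1 y.2.2) *
              ((if x.2.1 = x.2.2 then (1:ℝ) else 0) * (if y.2.1 = y.2.2 then (1:ℝ) else 0)))
          + N * ((G x.2.1 x.2.2 * G y.2.1 y.2.2) *
              ((if x.1 = y.1 then (1:ℝ) else 0) *
                ((if x.2.1 = y.2.1 then (1:ℝ) else 0) * (if x.2.2 = y.2.2 then (1:ℝ) else 0))))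
          + N * ((G x.2.1 x.2.2 * G y.2.1 y.2.2) *
              ((if x.1 = y.1 then (1:ℝ) else 0) *
                ((if x.2.1 = y.2.2 then (1:ℝ) else 0) * (if x.2.2 = y.2.1 then (1:ℝ) else 0))))
          - 2 * (N * ((G x.2.1 x.2.2 * G y.2.1 y.2.2) *
              ((if x.1 = y.1 then (1:ℝ) else 0) * ((if x.2.1 = x.2.2 then (1:ℝ) else 0) *
                ((if y.2.1 = y.2.2 then (1:ℝ) else 0) *
                  ((if x.2.1 = y.2.1 then (1:ℝ) else 0) * (if x.2.2 = y.2.2 then (1:ℝ) else 0))))))) :=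
      fun x y => by ring
    rw [Finset.sum_congr rfl fun x _ => Finset.sum_congr rfl fun y _ => h3 x y]
    simp only [Finset.sum_add_distrib, Finset.sum_sub_distrib, ← Finset.mul_sum]
    rw [V1eval, V2eval, V3eval, V4eval]
    have hsym : (∑ k, ∑ l, G k l * G l k) = ∑ k, ∑ l, G k l * G k l :=
      Finset.sum_congr rfl fun k _ => Finset.sum_congr rfl fun l _ => by
        have : G l k = G k l := Finset.sum_congr rfl fun i _ => mul_comm _ _
        rw [this]
    have hdiag2 : (∑ k, G k k * G k k) = ∑ k, (G k k)^2 :=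
      Finset.sum_congr rfl fun k _ => (sq _).symm
    rw [hsym, hdiag2]
    field_simp
    ring
  -- conclude
  rw [ProbabilityTheory.variance_eq_sub (by exact MemLp.of_discrete)]
  have h1 : ∫ ω, ((fun ω => S ω)^2) ω ∂ signMeasure d t = N⁻¹ * ∑ ω, (S ω)^2 := by
    simp only [Pi.pow_apply]
    exact integral_signMeasure _
  have h2 : ∫ ω, S ω ∂ signMeasure d t = N⁻¹ * ∑ ω, S ω := integral_signMeasure _
  rw [h1, h2, hA, hB]
  have hNN : N⁻¹ * N = 1 := inv_mul_cancel₀ (ne_of_gt hN0)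
  have hfrob : frobNorm C ^ 4 = (∑ k, G k k)^2 := by
    have h : frobNorm C ^ 2 = ∑ k, G k k := by
      unfold frobNorm
      rw [Real.sq_sqrt (by positivity), Finset.sum_comm]
      exact Finset.sum_congr rfl fun k _ => Finset.sum_congr rfl fun i _ => sq (C i k)
    calc frobNorm C ^ 4 = (frobNorm C ^ 2)^2 := by ring
      _ = (∑ k, G k k)^2 := by rw [h]
  have hCS : (∑ k, ∑ l, G k l * G k l) ≤ (∑ k, G k k)^2 := by
    have key : ∀ k l, G k l * G k l ≤ G k k * G l l := by
      intro k l
      have h1 := Finset.sum_mul_sq_le_sq_mul_sq Finset.univ (fun i => C i k) (fun i => C i l)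
      calc G k l * G k l = (∑ i, C i k * C i l)^2 := (sq _).symm
        _ ≤ (∑ i, C i k ^2) * (∑ i, C i l ^2) := h1
        _ = G k k * G l l := by
            simp only [hG]
            congr 1 <;> exact Finset.sum_congr rfl fun i _ => sq _
    calc ∑ k, ∑ l, G k l * G k l ≤ ∑ k, ∑ l, G k k * G l l :=
          Finset.sum_le_sum fun k _ => Finset.sum_le_sum fun l _ => key k l
      _ = (∑ k, G k k) * (∑ l, G l l) := (Finset.sum_mul_sum _ _ _ _).symm
      _ = (∑ k, G k k)^2 := (sq _).symm
  have hdiag : 0 ≤ ∑ k, (G k k)^2 := by positivity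
  rw [hfrob, ← mul_assoc, ← mul_assoc, hNN, one_mul, one_mul, div_eq_mul_inv]
  have h3 : 2 * (t:ℝ)⁻¹ * ((∑ k, ∑ l, G k l * G k l) - ∑ k, (G k k)^2)
      ≤ 2 * (t:ℝ)⁻¹ * ((∑ k, G k k)^2) := by
    apply mul_le_mul_of_nonneg_left _ (by positivity)
    linarith
  nlinarith [h3]
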